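/- Let p be a prime, H a finite p-group with exp(Z(H)) = exp(H) = p^e, and l ≥ 1. Let h, h' ∈ Z(H) both of order p^e, let Ĝ := C × H with C cyclic of order p^(e+l) and generator ĝ, and set K := ⟨(ĝ^(p^l), h⁻¹)⟩ and K' := ⟨(ĝ^(p^l), h'⁻¹)⟩. If the quotients Ĝ/K and Ĝ/K' are isomorphic as groups, then there exist an automorphism α of H, an integer k coprime to p, and z ∈ Z(H) such that h' = α(h)^k · z^(p^l). -/

import Mathlib

open Subgroup Multiplicative QuotientGroup

namespace Stmt19

def rho {G H : Type*} [Group G] [Group H] (K : Subgroup (G × H)) [K.Normal] :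
    H →* (G × H) ⧸ K :=
  (QuotientGroup.mk' K).comp (MonoidHom.inr G H)

def gbar {N : ℕ} {H : Type*} [Group H]
    (K : Subgroup (Multiplicative (ZMod N) × H)) [K.Normal] :
    (Multiplicative (ZMod N) × H) ⧸ K :=
  QuotientGroup.mk' K (Multiplicative.ofAdd 1, 1)

variable {p e l : ℕ} {H : Type*} [Group H]

/-- powers of the generator of K -/
lemma kgen_zpow (h : H) (n : ℤ) :
    ((Multiplicative.ofAdd (1 : ZMod (p ^ (e + l)))) ^ p ^ l, h⁻¹) ^ n
      = (Multiplicative.ofAdd (((p ^ l * n : ℤ) : ZMod (p ^ (e + l)))), h ^ (-n)) := by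
  rw [Prod.pow_def]
  congr 1
  · rw [← zpow_natCast _ (p ^ l), ← zpow_mul, ← ofAdd_zsmul]
    congr 1
    rw [zsmul_eq_mul, mul_one]
    push_cast
    ring
  · rw [inv_zpow, ← zpow_neg]

lemma mem_K_iff (h : H) {K : Subgroup (Multiplicative (ZMod (p ^ (e + l))) × H)}
    (hK : K = Subgroup.zpowers
      ((Multiplicative.ofAdd (1 : ZMod (p ^ (e + l)))) ^ p ^ l, h⁻¹))
    (u : Multiplicative (ZMod (p ^ (e + l))) × H) :
    u ∈ K ↔ ∃ n : ℤ,
      u = (Multiplicative.ofAdd (((p ^ l * n : ℤ) : ZMod (p ^ (e + l)))), h ^ (-n)) := by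
  subst hK
  rw [Subgroup.mem_zpowers_iff]
  constructor
  · rintro ⟨n, rfl⟩
    exact ⟨n, (kgen_zpow h n)⟩
  · rintro ⟨n, rfl⟩
    exact ⟨n, kgen_zpow h n⟩

lemma cast_eq_zero_iff (hp : p.Prime) (n : ℤ) :
    (((p ^ l * n : ℤ) : ZMod (p ^ (e + l))) = 0) ↔ (p ^ e : ℤ) ∣ n := by
  rw [ZMod.intCast_zmod_eq_zero_iff_dvd]
  have : ((p ^ (e + l) : ℕ) : ℤ) = (p : ℤ) ^ l * (p : ℤ) ^ e := by
    push_cast; ring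
  rw [this, mul_dvd_mul_iff_left (a := (p : ℤ) ^ l)]
  exact pow_ne_zero _ (by exact_mod_cast hp.ne_zero)


lemma rho_apply {G H : Type*} [Group G] [Group H] (K : Subgroup (G × H)) [K.Normal] (x : H) :
    rho K x = QuotientGroup.mk' K (1, x) := rfl

lemma rho_inj (hp : p.Prime) {h : H} (hord : orderOf h = p ^ e)
    {K : Subgroup (Multiplicative (ZMod (p ^ (e + l))) × H)} [K.Normal]
    (hK : K = Subgroup.zpowers
      ((Multiplicative.ofAdd (1 : ZMod (p ^ (e + l)))) ^ p ^ l, h⁻¹)) :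
    Function.Injective (rho K) := by
  rw [injective_iff_map_eq_one]
  intro x hx
  have hmem : ((1 : Multiplicative (ZMod (p ^ (e + l)))), x) ∈ K := by
    rwa [rho_apply, QuotientGroup.mk'_apply, QuotientGroup.eq_one_iff] at hx
  rw [mem_K_iff h hK] at hmem
  obtain ⟨n, hn⟩ := hmem
  have h1 : ((p ^ l * n : ℤ) : ZMod (p ^ (e + l))) = 0 := by
    have h0 := congrArg (fun z => Multiplicative.toAdd z.1) hn
    simpa using h0.symm
  have h2 : (p ^ e : ℤ) ∣ n := (cast_eq_zero_iff hp n).mp h1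
  have h3 : x = h ^ (-n) := congrArg Prod.snd hn
  rw [h3, ← orderOf_dvd_iff_zpow_eq_one, hord]
  exact dvd_neg.mpr (by exact_mod_cast h2)

lemma gbar_central (K : Subgroup (Multiplicative (ZMod (p ^ (e + l))) × H)) [K.Normal]
    (u : (Multiplicative (ZMod (p ^ (e + l))) × H) ⧸ K) : Commute (gbar K) u := by
  obtain ⟨v, rfl⟩ := QuotientGroup.mk'_surjective K u
  have : Commute ((Multiplicative.ofAdd (1 : ZMod (p ^ (e + l))), (1 : H))) v := by
    show _ * _ = _ * _
    ext
    · simp [mul_comm]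
    · simp
  exact this.map (QuotientGroup.mk' K)

lemma gbar_pow_nat (K : Subgroup (Multiplicative (ZMod (p ^ (e + l))) × H)) [K.Normal]
    (a : ℕ) :
    gbar K ^ a = QuotientGroup.mk' K (Multiplicative.ofAdd ((a : ZMod (p ^ (e + l)))), 1) := by
  rw [gbar, ← map_pow]
  congr 1
  rw [Prod.pow_def, one_pow]
  congr 1
  rw [← ofAdd_nsmul]
  congr 1
  rw [nsmul_eq_mul, mul_one]

lemma gbar_pow_top (K : Subgroup (Multiplicative (ZMod (p ^ (e + l))) × H)) [K.Normal] :
    gbar K ^ p ^ (e + l) = 1 := by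
  rw [gbar_pow_nat, ZMod.natCast_self]
  simp
  exact K.one_mem

lemma gbar_pow_pl (h : H)
    {K : Subgroup (Multiplicative (ZMod (p ^ (e + l))) × H)} [K.Normal]
    (hK : K = Subgroup.zpowers
      ((Multiplicative.ofAdd (1 : ZMod (p ^ (e + l)))) ^ p ^ l, h⁻¹)) :
    gbar K ^ p ^ l = rho K h := by
  have hgen : ((Multiplicative.ofAdd (1 : ZMod (p ^ (e + l)))) ^ p ^ l, h⁻¹) ∈ K :=
    hK ▸ Subgroup.mem_zpowers _
  rw [gbar_pow_nat, rho_apply]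
  have key : (Multiplicative.ofAdd (((p ^ l : ℕ) : ZMod (p ^ (e + l)))), (1 : H))
      = ((Multiplicative.ofAdd (1 : ZMod (p ^ (e + l)))) ^ p ^ l, h⁻¹) *
        ((1 : Multiplicative (ZMod (p ^ (e + l)))), h) := by
    rw [Prod.mk_mul_mk, mul_one, inv_mul_cancel]
    congr 1
    rw [← ofAdd_nsmul]
    congr 1
    rw [nsmul_eq_mul, mul_one]
  rw [key, map_mul]
  have : QuotientGroup.mk' K ((Multiplicative.ofAdd (1 : ZMod (p ^ (e + l)))) ^ p ^ l, h⁻¹) = 1 :=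
    (QuotientGroup.eq_one_iff _).mpr hgen
  rw [this, one_mul]

lemma exists_rep (hp : p.Prime)
    (K : Subgroup (Multiplicative (ZMod (p ^ (e + l))) × H)) [K.Normal]
    (u : (Multiplicative (ZMod (p ^ (e + l))) × H) ⧸ K) :
    ∃ (a : ℕ) (x : H), u = gbar K ^ a * rho K x := by
  haveI : NeZero (p ^ (e + l)) := ⟨pow_ne_zero _ hp.ne_zero⟩
  obtain ⟨⟨c, x⟩, rfl⟩ := QuotientGroup.mk'_surjective K u
  refine ⟨(Multiplicative.toAdd c).val, x, ?_⟩
  rw [gbar_pow_nat, rho_apply, ← map_mul]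
  congr 1
  rw [ZMod.natCast_val, ZMod.cast_id]
  ext
  · simp
  · simp

lemma gbar_pow_ne_one (hp : p.Prime) (hl : 1 ≤ l) {h : H} (hord : orderOf h = p ^ e)
    {K : Subgroup (Multiplicative (ZMod (p ^ (e + l))) × H)} [K.Normal]
    (hK : K = Subgroup.zpowers
      ((Multiplicative.ofAdd (1 : ZMod (p ^ (e + l)))) ^ p ^ l, h⁻¹)) :
    gbar K ^ p ^ (e + l - 1) ≠ 1 := by
  intro hone
  rw [gbar_pow_nat, QuotientGroup.mk'_apply, QuotientGroup.eq_one_iff, mem_K_iff h hK] at hone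
  obtain ⟨n, hn⟩ := hone
  have h2 : (p ^ e : ℤ) ∣ n := by
    have h3 : (1 : H) = h ^ (-n) := congrArg Prod.snd hn
    have h4 : (orderOf h : ℤ) ∣ -n := orderOf_dvd_iff_zpow_eq_one.mpr h3.symm
    rw [hord] at h4
    exact (dvd_neg.mp (by exact_mod_cast h4))
  obtain ⟨c, rfl⟩ := h2
  have h5 : ((p ^ (e + l - 1) : ℕ) : ZMod (p ^ (e + l))) = ((p ^ l * (p ^ e * c) : ℤ) : ZMod (p ^ (e + l))) :=
    congrArg (fun z => Multiplicative.toAdd z.1) hn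
  have h6 : (((p ^ (e + l - 1) : ℕ) : ℤ) : ZMod (p ^ (e + l))) = 0 := by
    rw [show (((p ^ (e + l - 1) : ℕ) : ℤ) : ZMod (p ^ (e + l))) = ((p ^ (e + l - 1) : ℕ) : ZMod (p ^ (e + l))) by push_cast; ring, h5,
      show (p ^ l * (p ^ e * c) : ℤ) = ((p ^ (e + l) : ℕ) : ℤ) * c by push_cast; ring,
      ZMod.intCast_zmod_eq_zero_iff_dvd]
    exact dvd_mul_right _ c
  rw [ZMod.intCast_zmod_eq_zero_iff_dvd] at h6
  have h7 : p ^ (e + l) ∣ p ^ (e + l - 1) := by exact_mod_cast h6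
  have := (Nat.pow_dvd_pow_iff_le_right hp.one_lt).mp h7
  omega

lemma mem_range_iff (hp : p.Prime) (hexp : ∀ x : H, x ^ p ^ e = 1) {h : H}
    (hord : orderOf h = p ^ e)
    {K : Subgroup (Multiplicative (ZMod (p ^ (e + l))) × H)} [K.Normal]
    (hK : K = Subgroup.zpowers
      ((Multiplicative.ofAdd (1 : ZMod (p ^ (e + l)))) ^ p ^ l, h⁻¹))
    (u : (Multiplicative (ZMod (p ^ (e + l))) × H) ⧸ K) :
    u ∈ (rho K).range ↔ u ^ p ^ e = 1 := by
  constructor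
  · rintro ⟨x, rfl⟩
    rw [← map_pow, hexp x, map_one]
  · intro hu
    obtain ⟨a, x, rfl⟩ := exists_rep hp K u
    have comm : Commute (gbar K ^ a) (rho K x) := (gbar_central K (rho K x)).pow_left a
    rw [comm.mul_pow, ← pow_mul, ← map_pow, hexp, map_one, mul_one] at hu
    -- hu : gbar K ^ (a * p ^ e) = 1
    rw [gbar_pow_nat, QuotientGroup.mk'_apply, QuotientGroup.eq_one_iff, mem_K_iff h hK] at hu
    obtain ⟨n, hn⟩ := hu
    have h2 : (p ^ e : ℤ) ∣ n := by
      have h3 : (1 : H) = h ^ (-n) := congrArg Prod.snd hn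
      have h4 : (orderOf h : ℤ) ∣ -n := orderOf_dvd_iff_zpow_eq_one.mpr h3.symm
      rw [hord] at h4
      exact (dvd_neg.mp (by exact_mod_cast h4))
    obtain ⟨c, rfl⟩ := h2
    have h5' : ((a * p ^ e : ℕ) : ZMod (p ^ (e + l))) = ((p ^ l * (p ^ e * c) : ℤ) : ZMod (p ^ (e + l))) :=
      congrArg (fun z => Multiplicative.toAdd z.1) hn
    have h5 : (((a * p ^ e : ℕ) : ℤ) : ZMod (p ^ (e + l))) = 0 := by
      rw [show ((((a * p ^ e : ℕ)) : ℤ) : ZMod (p ^ (e + l))) = ((a * p ^ e : ℕ) : ZMod (p ^ (e + l))) by push_cast; ring, h5',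
        show (p ^ l * (p ^ e * c) : ℤ) = ((p ^ (e + l) : ℕ) : ℤ) * c by push_cast; ring,
        ZMod.intCast_zmod_eq_zero_iff_dvd]
      exact dvd_mul_right _ c
    rw [ZMod.intCast_zmod_eq_zero_iff_dvd] at h5
    have h6 : p ^ (e + l) ∣ a * p ^ e := by exact_mod_cast h5
    have h7 : p ^ l ∣ a := by
      have : p ^ l * p ^ e ∣ a * p ^ e := by
        rw [show p ^ l * p ^ e = p ^ (e + l) by rw [← pow_add]; ring_nf]
        exact h6
      exact (Nat.mul_dvd_mul_iff_right (pow_pos hp.pos e)).mp this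
    obtain ⟨d, rfl⟩ := h7
    refine ⟨h ^ d * x, ?_⟩
    rw [map_mul, pow_mul, gbar_pow_pl h hK, map_pow]

lemma map_range_eq {Q Q' : Type*} [Group Q] [Group Q'] (φ : Q ≃* Q') (m : ℕ)
    (S : Subgroup Q) (T : Subgroup Q')
    (hS : ∀ u, u ∈ S ↔ u ^ m = 1) (hT : ∀ u, u ∈ T ↔ u ^ m = 1) :
    S.map (φ : Q →* Q') = T := by
  ext u
  rw [Subgroup.mem_map, hT]
  constructor
  · rintro ⟨v, hv, rfl⟩
    show (φ v) ^ m = 1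
    rw [← map_pow, (hS v).mp hv, map_one]
  · intro hu
    refine ⟨φ.symm u, (hS _).mpr ?_, φ.apply_symm_apply u⟩
    rw [← map_pow, hu, map_one]

end Stmt19

open Stmt19
theorem stmt_19 (p e l : ℕ) (hp : p.Prime) (H : Type*) [Group H] [Finite H]
    (hH : IsPGroup p H)
    (hZexp : Monoid.exponent (Subgroup.center H) = p ^ e)
    (hexp : Monoid.exponent H = p ^ e)
    (h h' : H) (hhZ : h ∈ Subgroup.center H) (hh'Z : h' ∈ Subgroup.center H)
    (hord : orderOf h = p ^ e) (hord' : orderOf h' = p ^ e)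
    (hl : 1 ≤ l)
    (K K' : Subgroup (Multiplicative (ZMod (p ^ (e + l))) × H))
    (hK : K = Subgroup.zpowers
      ((Multiplicative.ofAdd (1 : ZMod (p ^ (e + l)))) ^ p ^ l, h⁻¹))
    (hK' : K' = Subgroup.zpowers
      ((Multiplicative.ofAdd (1 : ZMod (p ^ (e + l)))) ^ p ^ l, h'⁻¹))
    [K.Normal] [K'.Normal]
    (hiso : Nonempty (((Multiplicative (ZMod (p ^ (e + l))) × H) ⧸ K) ≃*
      ((Multiplicative (ZMod (p ^ (e + l))) × H) ⧸ K'))) :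
    ∃ (α : H ≃* H) (k : ℤ), Int.gcd k p = 1 ∧
      ∃ z ∈ Subgroup.center H, h' = (α h) ^ k * z ^ p ^ l := by
  obtain ⟨φ⟩ := hiso
  have hexp1 : ∀ x : H, x ^ p ^ e = 1 := fun x => by
    rw [← hexp]; exact Monoid.pow_exponent_eq_one x
  have hρ : Function.Injective (rho K) := rho_inj hp hord hK
  have hρ' : Function.Injective (rho K') := rho_inj hp hord' hK'
  have hmap : (rho K).range.map (φ : _ →* _) = (rho K').range :=
    map_range_eq φ (p ^ e) _ _
      (fun u => mem_range_iff hp hexp1 hord hK u)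
      (fun u => mem_range_iff hp hexp1 hord' hK' u)
  let α : H ≃* H :=
    (MonoidHom.ofInjective hρ).trans ((φ.subgroupMap (rho K).range).trans
      ((MulEquiv.subgroupCongr hmap).trans (MonoidHom.ofInjective hρ').symm))
  have hα : ∀ x : H, rho K' (α x) = φ (rho K x) := by
    intro x
    have h1 : α x = (MonoidHom.ofInjective hρ').symm
        ((MulEquiv.subgroupCongr hmap)
          ((φ.subgroupMap (rho K).range) ((MonoidHom.ofInjective hρ) x))) := rfl
    rw [h1, MonoidHom.apply_ofInjective_symm hρ', MulEquiv.subgroupCongr_apply,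
      MulEquiv.coe_subgroupMap_apply]
    congr 1
  -- φ (gbar K) commutes with everything
  have hφg : ∀ u', Commute (φ (gbar K)) u' := by
    intro u'
    obtain ⟨v, rfl⟩ := φ.surjective u'
    exact (gbar_central K v).map φ
  obtain ⟨m, y, hrep⟩ := exists_rep hp K' (φ (gbar K))
  -- y is central
  have hyZ : y ∈ Subgroup.center H := by
    rw [Subgroup.mem_center_iff]
    intro x
    have c1 : Commute (gbar K' ^ m * rho K' y) (rho K' x) := by
      rw [← hrep]; exact hφg _
    have c2 : Commute (gbar K' ^ m) (rho K' x) := (gbar_central K' _).pow_left m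
    have c3 : rho K' (y * x) = rho K' (x * y) := by
      have e1 : gbar K' ^ m * (rho K' y * rho K' x)
          = gbar K' ^ m * (rho K' x * rho K' y) := by
        calc gbar K' ^ m * (rho K' y * rho K' x)
            = (gbar K' ^ m * rho K' y) * rho K' x := by rw [mul_assoc]
          _ = rho K' x * (gbar K' ^ m * rho K' y) := c1.eq
          _ = (rho K' x * gbar K' ^ m) * rho K' y := by rw [mul_assoc]
          _ = (gbar K' ^ m * rho K' x) * rho K' y := by rw [← c2.eq]
          _ = gbar K' ^ m * (rho K' x * rho K' y) := by rw [mul_assoc]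
      have e2 := mul_left_cancel e1
      rwa [← map_mul, ← map_mul] at e2
    exact (hρ' c3).symm
  -- p does not divide m
  have hpm : ¬ p ∣ m := by
    rintro ⟨m', rfl⟩
    apply gbar_pow_ne_one hp hl hord hK
    apply φ.injective
    rw [map_pow, map_one, hrep]
    have comm : Commute (gbar K' ^ (p * m')) (rho K' y) := (gbar_central K' _).pow_left _
    rw [comm.mul_pow, ← pow_mul, ← map_pow]
    have hy1 : y ^ p ^ (e + l - 1) = 1 := by
      have harr : e + l - 1 = e + (l - 1) := by omega
      rw [harr, pow_add, pow_mul, hexp1, one_pow]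
    rw [hy1, map_one, mul_one]
    have harith : p * m' * p ^ (e + l - 1) = p ^ (e + l) * m' := by
      have h1 : e + l = (e + l - 1) + 1 := by omega
      calc p * m' * p ^ (e + l - 1) = p ^ ((e + l - 1) + 1) * m' := by ring
        _ = p ^ (e + l) * m' := by rw [← h1]
    rw [harith, pow_mul, gbar_pow_top, one_pow]
  -- α h = h'^m * y^{p^l}
  have hαh : α h = h' ^ m * y ^ p ^ l := by
    apply hρ'
    rw [hα h, ← gbar_pow_pl h hK, map_pow, hrep]
    have comm : Commute (gbar K' ^ m) (rho K' y) := (gbar_central K' _).pow_left _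
    rw [comm.mul_pow, ← pow_mul, mul_comm m (p ^ l), pow_mul, gbar_pow_pl h' hK',
      ← map_pow, ← map_pow, ← map_mul]
  -- arithmetic
  have hmp : Nat.Coprime m p := Nat.coprime_comm.mp (hp.coprime_iff_not_dvd.mpr hpm)
  have hcop : IsCoprime (m : ℤ) ((p : ℤ) ^ (e + 1)) := by
    have hc := (Nat.isCoprime_iff_coprime (m := m) (n := p ^ (e + 1))).mpr (hmp.pow_right _)
    push_cast at hc
    exact hc
  obtain ⟨u, v, huv⟩ := hcop
  refine ⟨α, u, ?_, y ^ (-u), Subgroup.zpow_mem _ hyZ _, ?_⟩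
  · rw [← Int.isCoprime_iff_gcd_eq_one]
    exact ⟨m, v * (p : ℤ) ^ e, by push_cast; linear_combination huv⟩
  · rw [hαh]
    have hc1 : Commute h' y := ((Subgroup.mem_center_iff.mp hh'Z) y).symm
    have e1 : (h' ^ m * y ^ p ^ l) ^ u = h' ^ ((m : ℤ) * u) * y ^ (((p ^ l : ℕ) : ℤ) * u) := by
      rw [(hc1.pow_pow m (p ^ l)).mul_zpow,
        ← zpow_natCast h' m, ← zpow_mul, ← zpow_natCast y (p ^ l), ← zpow_mul]
    have e2 : (y ^ (-u)) ^ p ^ l = y ^ (-(((p ^ l : ℕ) : ℤ) * u)) := by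
      rw [← zpow_natCast (y ^ (-u)) (p ^ l), ← zpow_mul]
      congr 1; ring
    rw [e1, e2]
    have e3 : h' ^ ((m : ℤ) * u) = h' := by
      have harr : (m : ℤ) * u = 1 + ((p : ℤ) ^ e) * (-v * p) := by linear_combination huv
      rw [harr, zpow_add, zpow_one, zpow_mul,
        show ((p : ℤ) ^ e) = ((p ^ e : ℕ) : ℤ) by push_cast; ring,
        zpow_natCast, ← hord', pow_orderOf_eq_one, one_zpow, mul_one]
    rw [e3, mul_assoc, ← zpow_add, add_neg_cancel, zpow_zero, mul_one]
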